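/- arXiv:1401.2290 — 3 statements merged into one kernel-verified Lean document; each statement's English description precedes it below -/
import Mathlib

section
/- Let X be a k-dimensional simplicial complex on a finite vertex set V, let V = A_0 ⊔ … ⊔ A_k be a partition into nonempty parts, and let f ∈ C^{k−1}(X;ℝ) be the associated cochain (with the partition-adapted linear order on V). Let τ = {v_0 < v_1 < … < v_k} ∈ F^∂(A_0,…,A_k) and set d_j = d(τ∖{v_j}) for j = 0,…,k. Then for every g ∈ C^{k−2}(X;ℝ): q(τ,g) = Σ_{j=0}^{k} (1/d_j)·(f(τ∖{v_j}) − (δ_{k−2}g)(τ∖{v_j}))² ≥ |V|²/(Σ_{j=0}^{k} d_j). -/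
open Finset

namespace HigherCheeger

variable {V : Type*} [DecidableEq V] [Fintype V] [LinearOrder V]

/-- An abstract simplicial complex: a family of finite subsets of `V`
closed under taking subsets. -/
def IsComplex (X : Finset (Finset V)) : Prop :=
  ∀ σ ∈ X, ∀ τ ⊆ σ, τ ∈ X

/-- `X` is `k`-dimensional: every face has at most `k+1` vertices
and some face has exactly `k+1` vertices. -/
def IsDim (X : Finset (Finset V)) (k : ℕ) : Prop :=
  (∀ σ ∈ X, σ.card ≤ k + 1) ∧ ∃ σ ∈ X, σ.card = k + 1

/-- The faces of `X` of cardinality `c` (i.e. of dimension `c - 1`). -/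
def faces (X : Finset (Finset V)) (c : ℕ) : Finset (Finset V) :=
  X.filter fun σ => σ.card = c

/-- `X` has complete `(k-1)`-skeleton: every subset of `V` of size at most `k` is a face. -/
def CompleteSkeleton (X : Finset (Finset V)) (k : ℕ) : Prop :=
  ∀ σ : Finset V, σ.card ≤ k → σ ∈ X

/-- The `k`-dimensional completion `K(X)`. -/
def completion (X : Finset (Finset V)) (k : ℕ) : Finset (Finset V) :=
  X ∪ (Finset.univ.filter fun τ : Finset V => τ.card = k + 1 ∧ ∀ v ∈ τ, τ.erase v ∈ X)

/-- The complete `k`-dimensional complex `K_n^k` on the vertex set `V`. -/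
def completeComplex (V : Type*) [DecidableEq V] [Fintype V] (k : ℕ) : Finset (Finset V) :=
  Finset.univ.filter fun σ : Finset V => σ.card ≤ k + 1

/-- The oriented incidence number `[τ:σ]` (with respect to the linear order on `V`):
`(-1)^j` if `σ = τ \ {v_j}` where `v_j` is the `j`-th smallest vertex of `τ`, and `0` otherwise. -/
def incidence (τ σ : Finset V) : ℝ :=
  if σ ⊆ τ ∧ σ.card + 1 = τ.card then
    ∑ v ∈ τ \ σ, (-1 : ℝ) ^ (τ.filter fun w => w < v).card
  else 0

/-- The real coboundary operator `δ` applied to a cochain living on the faces of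
cardinality `c`; the result lives on faces of cardinality `c + 1`. -/
def delta (X : Finset (Finset V)) (c : ℕ) (f : Finset V → ℝ) : Finset V → ℝ :=
  fun τ => ∑ σ ∈ faces X c, incidence τ σ * f σ

/-- The real boundary operator `∂` (the adjoint of `δ`) applied to a cochain living
on the faces of cardinality `c`; the result lives on faces of cardinality `c - 1`. -/
def bdry (X : Finset (Finset V)) (c : ℕ) (f : Finset V → ℝ) : Finset V → ℝ :=
  fun σ => ∑ τ ∈ faces X c, incidence τ σ * f τ

/-- The inner product of two cochains on the faces of cardinality `c`. -/
def inn (X : Finset (Finset V)) (c : ℕ) (f g : Finset V → ℝ) : ℝ :=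
  ∑ σ ∈ faces X c, f σ * g σ

/-- The upper Laplacian `L^up_{k-1} = ∂_k δ_{k-1}` acting on `(k-1)`-cochains
(functions on faces of cardinality `k`). -/
def lapUp (X : Finset (Finset V)) (k : ℕ) (f : Finset V → ℝ) : Finset V → ℝ :=
  bdry X (k + 1) (delta X k f)

/-- The lower Laplacian `L^down_{k-1} = δ_{k-2} ∂_{k-1}` acting on `(k-1)`-cochains. -/
def lapDown (X : Finset (Finset V)) (k : ℕ) (f : Finset V → ℝ) : Finset V → ℝ :=
  delta X (k - 1) (bdry X k f)

/-- `f ∈ Z_{k-1}(X;ℝ) = ker ∂_{k-1}`. -/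
def IsCycle (X : Finset (Finset V)) (k : ℕ) (f : Finset V → ℝ) : Prop :=
  ∀ σ : Finset V, bdry X k f σ = 0

/-- `f ∈ B^{k-1}(X;ℝ) = im δ_{k-2}` (as a cochain, i.e. on the `(k-1)`-faces). -/
def IsCobdry (X : Finset (Finset V)) (k : ℕ) (f : Finset V → ℝ) : Prop :=
  ∃ g : Finset V → ℝ, ∀ σ ∈ faces X k, f σ = delta X (k - 1) g σ

/-- The spectral gap `λ(X)`: the minimum of the Rayleigh quotient
`⟨L^up_{k-1}(X) f, f⟩ / ⟨f, f⟩` over nonzero `f ∈ Z_{k-1}(X;ℝ)`. -/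
noncomputable def spectralGap (X : Finset (Finset V)) (k : ℕ) : ℝ :=
  sInf {r : ℝ | ∃ f : Finset V → ℝ, IsCycle X k f ∧ inn X k f f ≠ 0 ∧
    r = inn X k (lapUp X k f) f / inn X k f f}

/-- A partition of `V` into `m` (nonempty) parts. -/
def IsPartition {m : ℕ} (A : Fin m → Finset V) : Prop :=
  (∀ i, (A i).Nonempty) ∧ ∀ v : V, ∃! i, v ∈ A i

/-- The linear order on `V` is adapted to the family of parts `A`. -/
def OrderAdapted {m : ℕ} (A : Fin m → Finset V) : Prop :=
  ∀ i j : Fin m, i < j → ∀ v ∈ A i, ∀ w ∈ A j, v < w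

/-- `F(A_0,…,A_k)`: the `k`-faces of `X` with exactly one vertex in each part. -/
def Fset (X : Finset (Finset V)) (k : ℕ) (A : Fin (k + 1) → Finset V) : Finset (Finset V) :=
  (faces X (k + 1)).filter fun τ => ∀ i, (τ ∩ A i).card = 1

/-- `F^∂(A_0,…,A_k)`: the `(k+1)`-element members of `K(X)` with exactly one vertex
in each part. -/
def Fpar (X : Finset (Finset V)) (k : ℕ) (A : Fin (k + 1) → Finset V) : Finset (Finset V) :=
  (faces (completion X k) (k + 1)).filter fun τ => ∀ i, (τ ∩ A i).card = 1

/-- The value `|V|·|F(A_0,…,A_k)| / |F^∂(A_0,…,A_k)|` of a partition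
(`⊤` if the denominator is `0`). -/
noncomputable def cheegerVal (X : Finset (Finset V)) (k : ℕ) (A : Fin (k + 1) → Finset V) :
    EReal :=
  if (Fpar X k A).card = 0 then ⊤
  else (((Fintype.card V * (Fset X k A).card : ℝ) / ((Fpar X k A).card : ℝ) : ℝ) : EReal)

/-- The Cheeger constant `h(X)`. -/
noncomputable def cheeger (X : Finset (Finset V)) (k : ℕ) : EReal :=
  sInf {r : EReal | ∃ A : Fin (k + 1) → Finset V, IsPartition A ∧ r = cheegerVal X k A}

/-- `d(σ)`: the number of members of `F^∂(A_0,…,A_k)` containing `σ`. -/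
def degPar (X : Finset (Finset V)) (k : ℕ) (A : Fin (k + 1) → Finset V) (σ : Finset V) : ℕ :=
  ((Fpar X k A).filter fun τ => σ ⊆ τ).card

/-- `C(X)` (with respect to the partition `A`):
the maximum over `τ ∈ F^∂(A_0,…,A_k)` of `∑_{v ∈ τ} d(τ \ {v})`. -/
def Cconst (X : Finset (Finset V)) (k : ℕ) (A : Fin (k + 1) → Finset V) : ℕ :=
  (Fpar X k A).sup fun τ => ∑ v ∈ τ, degPar X k A (τ.erase v)

/-- The cochain associated to a partition `A`: `σ ↦ (-1)^l·|A_l|` if `A_l` is the unique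
part disjoint from `σ`, and `0` otherwise. -/
def assocCochain {k : ℕ} (A : Fin (k + 1) → Finset V) (σ : Finset V) : ℝ :=
  if (Finset.univ.filter fun l => σ ∩ A l = ∅).card = 1 then
    ∑ l ∈ Finset.univ.filter fun l => σ ∩ A l = ∅, (-1 : ℝ) ^ (l : ℕ) * ((A l).card : ℝ)
  else 0

/-- The `Z₂`-coboundary: a `(c-1)`-cochain `f` is sent to
`τ ↦ ∑_{v ∈ τ} f (τ \ {v})`. -/
def deltaZ2 (f : Finset V → ZMod 2) (τ : Finset V) : ZMod 2 :=
  ∑ v ∈ τ, f (τ.erase v)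

/-- The support of the `Z₂`-coboundary of `f` in `X`: the faces of `X` of cardinality
`k + 1` on which the `Z₂`-coboundary of `f` is nonzero.  Its cardinality is `|δ_X f|`. -/
def suppDelta (X : Finset (Finset V)) (k : ℕ) (f : Finset V → ZMod 2) : Finset (Finset V) :=
  (faces X (k + 1)).filter fun τ => deltaZ2 f τ ≠ 0

/-- `F(A_0,…,A_{k-1})`: the `(k-1)`-faces of `X` with exactly one vertex in each of
the `k` parts. -/
def FsetLow (X : Finset (Finset V)) (k : ℕ) (A : Fin k → Finset V) : Finset (Finset V) :=
  (faces X k).filter fun σ => ∀ i, (σ ∩ A i).card = 1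

/-- The Cheeger-type constant `h'(X)`. -/
noncomputable def cheeger' (X : Finset (Finset V)) (k : ℕ) : EReal :=
  sInf {r : EReal | ∃ (A : Fin k → Finset V) (f : Finset V → ZMod 2),
    IsPartition A ∧ (∀ σ, f σ ≠ 0 → σ ∈ FsetLow X k A) ∧
    r = if (suppDelta (completion X k) k f).card = 0 then (⊤ : EReal)
        else (((Fintype.card V * (suppDelta X k f).card : ℝ) /
              ((suppDelta (completion X k) k f).card : ℝ) : ℝ) : EReal)}

/-- The Hamming norm of a `Z₂`-cochain on the faces of cardinality `c`. -/
def hamming (X : Finset (Finset V)) (c : ℕ) (f : Finset V → ZMod 2) : ℕ :=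
  ((faces X c).filter fun σ => f σ ≠ 0).card

/-- `|[f]|`: the minimum Hamming norm of `f + δ_X g` over `g ∈ C^{k-2}(X;Z₂)`. -/
noncomputable def normClass (X : Finset (Finset V)) (k : ℕ) (f : Finset V → ZMod 2) : ℕ :=
  sInf {m : ℕ | ∃ g : Finset V → ZMod 2, m = hamming X k fun σ => f σ + deltaZ2 g σ}

/-- The coboundary expansion `φ(X) = min_f |δ_X f| / |[f]|` (quotients with denominator
`0` are `∞`). -/
noncomputable def phi (X : Finset (Finset V)) (k : ℕ) : EReal :=
  sInf {r : EReal | ∃ f : Finset V → ZMod 2,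
    r = if normClass X k f = 0 then (⊤ : EReal)
        else ((((suppDelta X k f).card : ℝ) / (normClass X k f : ℝ) : ℝ) : EReal)}

/-- `h̃(X) = min_f |V|·|δ_X f| / |δ_{K(X)} f|` (quotients with denominator `0` are `∞`). -/
noncomputable def htilde (X : Finset (Finset V)) (k : ℕ) : EReal :=
  sInf {r : EReal | ∃ f : Finset V → ZMod 2,
    r = if (suppDelta (completion X k) k f).card = 0 then (⊤ : EReal)
        else (((Fintype.card V * (suppDelta X k f).card : ℝ) /
              ((suppDelta (completion X k) k f).card : ℝ) : ℝ) : EReal)}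



section AuxProof
variable {V : Type*} [DecidableEq V] [Fintype V] [LinearOrder V]

lemma sdiff_erase_self' (τ : Finset V) {v : V} (hv : v ∈ τ) : τ \ τ.erase v = {v} := by
  ext w
  simp only [Finset.mem_sdiff, Finset.mem_erase, Finset.mem_singleton, not_and]
  constructor
  · rintro ⟨hw, h⟩
    by_contra hne
    exact h hne hw
  · rintro rfl
    exact ⟨hv, fun h _ => absurd rfl h⟩

lemma incidence_eq_zero {τ σ : Finset V} (h : ¬(σ ⊆ τ ∧ σ.card + 1 = τ.card)) :
    incidence τ σ = 0 := if_neg h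

lemma incidence_single {τ σ : Finset V} {y : V} (hsub : σ ⊆ τ) (hc : σ.card + 1 = τ.card)
    (hd : τ \ σ = {y}) :
    incidence τ σ = (-1 : ℝ) ^ (τ.filter fun w => w < y).card := by
  unfold incidence
  rw [if_pos ⟨hsub, hc⟩, hd, Finset.sum_singleton]

lemma incidence_erase (τ : Finset V) {v : V} (hv : v ∈ τ) :
    incidence τ (τ.erase v) = (-1 : ℝ) ^ (τ.filter fun w => w < v).card := by
  have h1 : 0 < τ.card := Finset.card_pos.mpr ⟨v, hv⟩
  exact incidence_single (Finset.erase_subset _ _)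
    (by rw [Finset.card_erase_of_mem hv]; omega) (sdiff_erase_self' τ hv)

lemma erase_sdiff_eq (τ σ : Finset V) (v : V) : (τ.erase v) \ σ = (τ \ σ).erase v := by
  ext w
  simp only [Finset.mem_sdiff, Finset.mem_erase]
  tauto

lemma two_term_zero {τ σ : Finset V} {x y : V} (hsub : σ ⊆ τ) (hc : σ.card + 2 = τ.card)
    (hxy : x < y) (hτσ : τ \ σ = {x, y}) :
    incidence τ (τ.erase x) * incidence (τ.erase x) σ
      + incidence τ (τ.erase y) * incidence (τ.erase y) σ = 0 := by
  have hne : x ≠ y := ne_of_lt hxy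
  have hxτ : x ∈ τ := (Finset.mem_sdiff.mp (hτσ ▸ Finset.mem_insert_self x {y})).1
  have hyτ : y ∈ τ := by
    have : y ∈ τ \ σ := hτσ ▸ Finset.mem_insert_of_mem (Finset.mem_singleton_self y)
    exact (Finset.mem_sdiff.mp this).1
  have hxσ : x ∉ σ := (Finset.mem_sdiff.mp (hτσ ▸ Finset.mem_insert_self x {y})).2
  have hyσ : y ∉ σ := by
    have : y ∈ τ \ σ := hτσ ▸ Finset.mem_insert_of_mem (Finset.mem_singleton_self y)
    exact (Finset.mem_sdiff.mp this).2
  have hcx : (τ.erase x).card = σ.card + 1 := by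
    rw [Finset.card_erase_of_mem hxτ]; omega
  have hcy : (τ.erase y).card = σ.card + 1 := by
    rw [Finset.card_erase_of_mem hyτ]; omega
  have hdx : (τ.erase x) \ σ = {y} := by
    rw [erase_sdiff_eq, hτσ]
    ext w
    simp only [Finset.mem_erase, Finset.mem_insert, Finset.mem_singleton]
    constructor
    · rintro ⟨h1, h2 | h2⟩
      · exact absurd h2 h1
      · exact h2
    · rintro rfl
      exact ⟨hne.symm, Or.inr rfl⟩
  have hdy : (τ.erase y) \ σ = {x} := by
    rw [erase_sdiff_eq, hτσ]
    ext w
    simp only [Finset.mem_erase, Finset.mem_insert, Finset.mem_singleton]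
    constructor
    · rintro ⟨h1, h2 | h2⟩
      · exact h2
      · exact absurd h2 h1
    · rintro rfl
      exact ⟨hne, Or.inl rfl⟩
  have e1 : incidence (τ.erase x) σ
      = (-1 : ℝ) ^ ((τ.erase x).filter fun w => w < y).card :=
    incidence_single (fun u hu => Finset.mem_erase.mpr ⟨fun h => hxσ (h ▸ hu), hsub hu⟩)
      hcx.symm hdx
  have e2 : incidence (τ.erase y) σ
      = (-1 : ℝ) ^ ((τ.erase y).filter fun w => w < x).card :=
    incidence_single (fun u hu => Finset.mem_erase.mpr ⟨fun h => hyσ (h ▸ hu), hsub hu⟩)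
      hcy.symm hdy
  have hfx : ((τ.erase x).filter fun w => w < y) = ((τ.filter fun w => w < y).erase x) := by
    rw [Finset.filter_erase]
  have hfy : ((τ.erase y).filter fun w => w < x) = ((τ.filter fun w => w < x).erase y) := by
    rw [Finset.filter_erase]
  have hxmem : x ∈ τ.filter fun w => w < y := Finset.mem_filter.mpr ⟨hxτ, hxy⟩
  have hynmem : y ∉ τ.filter fun w => w < x := by
    simp only [Finset.mem_filter, not_and]
    exact fun _ => not_lt_of_gt hxy
  rw [incidence_erase τ hxτ, incidence_erase τ hyτ, e1, e2, hfx, hfy,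
    Finset.card_erase_of_mem hxmem, Finset.erase_eq_of_notMem hynmem]
  obtain ⟨m, hm⟩ : ∃ m, (τ.filter fun w => w < y).card = m + 1 :=
    ⟨(τ.filter fun w => w < y).card - 1, by
      have := Finset.card_pos.mpr ⟨x, hxmem⟩; omega⟩
  rw [hm]
  simp only [Nat.add_sub_cancel, pow_succ]
  ring

lemma sum_inc_inc (τ σ : Finset V) :
    ∑ v ∈ τ, incidence τ (τ.erase v) * incidence (τ.erase v) σ = 0 := by
  by_cases hcase : σ ⊆ τ ∧ σ.card + 2 = τ.card
  · obtain ⟨hsub, hc⟩ := hcase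
    have hsd : (τ \ σ).card = 2 := by rw [Finset.card_sdiff_of_subset hsub]; omega
    obtain ⟨x, y, hxy, hτσ⟩ := Finset.card_eq_two.mp hsd
    have hrestr : ∑ v ∈ τ, incidence τ (τ.erase v) * incidence (τ.erase v) σ
        = ∑ v ∈ τ \ σ, incidence τ (τ.erase v) * incidence (τ.erase v) σ := by
      refine (Finset.sum_subset Finset.sdiff_subset ?_).symm
      intro v hv hns
      have hvσ : v ∈ σ := by
        by_contra h
        exact hns (Finset.mem_sdiff.mpr ⟨hv, h⟩)
      have : incidence (τ.erase v) σ = 0 :=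
        incidence_eq_zero (by
          rintro ⟨h1, _⟩
          exact (Finset.mem_erase.mp (h1 hvσ)).1 rfl)
      rw [this, mul_zero]
    rw [hrestr, hτσ, Finset.sum_pair hxy]
    rcases lt_or_gt_of_ne hxy with h | h
    · exact two_term_zero hsub hc h hτσ
    · rw [add_comm]
      exact two_term_zero hsub hc h (by rw [hτσ, Finset.pair_comm])
  · apply Finset.sum_eq_zero
    intro v hv
    have : incidence (τ.erase v) σ = 0 := by
      apply incidence_eq_zero
      rintro ⟨h1, h2⟩
      apply hcase
      have hpos : 0 < τ.card := Finset.card_pos.mpr ⟨v, hv⟩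
      refine ⟨h1.trans (Finset.erase_subset _ _), ?_⟩
      rw [Finset.card_erase_of_mem hv] at h2
      omega
    rw [this, mul_zero]

lemma sum_inc_delta_zero (X : Finset (Finset V)) (c : ℕ) (g : Finset V → ℝ) (τ : Finset V) :
    ∑ v ∈ τ, incidence τ (τ.erase v) * delta X c g (τ.erase v) = 0 := by
  unfold delta
  simp_rw [Finset.mul_sum]
  rw [Finset.sum_comm]
  apply Finset.sum_eq_zero
  intro σ _
  have : ∀ v ∈ τ, incidence τ (τ.erase v) * (incidence (τ.erase v) σ * g σ)
      = (incidence τ (τ.erase v) * incidence (τ.erase v) σ) * g σ :=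
    fun _ _ => (mul_assoc _ _ _).symm
  rw [Finset.sum_congr rfl this, ← Finset.sum_mul, sum_inc_inc, zero_mul]

lemma key_f {k : ℕ} (A : Fin (k + 1) → Finset V) (hA : IsPartition A) (hord : OrderAdapted A)
    (τ : Finset V) (hone : ∀ i, (τ ∩ A i).card = 1) {v : V} (hv : v ∈ τ) :
    incidence τ (τ.erase v) * assocCochain A (τ.erase v)
      = ∑ l : Fin (k + 1), if v ∈ A l then ((A l).card : ℝ) else 0 := by
  obtain ⟨i, hvi, huniq⟩ := hA.2 v
  have hτAi : τ ∩ A i = {v} := by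
    obtain ⟨u, hu⟩ := Finset.card_eq_one.mp (hone i)
    have hm : v ∈ ({u} : Finset V) := hu ▸ Finset.mem_inter.mpr ⟨hv, hvi⟩
    obtain rfl := Finset.mem_singleton.mp hm
    exact hu
  -- Step A : the number of smaller elements of τ is i
  have hfilt : (τ.filter fun w => w < v) = (Finset.Iio i).biUnion fun j => τ ∩ A j := by
    ext w
    simp only [Finset.mem_filter, Finset.mem_biUnion, Finset.mem_Iio, Finset.mem_inter]
    constructor
    · rintro ⟨hw, hwv⟩
      obtain ⟨j, hwj, _⟩ := hA.2 w
      refine ⟨j, ?_, hw, hwj⟩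
      rcases lt_trichotomy j i with h | h | h
      · exact h
      · subst h
        have : w ∈ τ ∩ A j := Finset.mem_inter.mpr ⟨hw, hwj⟩
        rw [hτAi] at this
        exact absurd (Finset.mem_singleton.mp this) (ne_of_lt hwv)
      · exact absurd (hord i j h v hvi w hwj) (not_lt_of_gt hwv)
    · rintro ⟨j, hji, hw, hwj⟩
      exact ⟨hw, hord j i hji w hwj v hvi⟩
  have hdisj : ∀ j ∈ Finset.Iio i, ∀ j' ∈ Finset.Iio i, j ≠ j' →
      Disjoint (τ ∩ A j) (τ ∩ A j') := by
    intro j _ j' _ hjj'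
    rw [Finset.disjoint_left]
    intro w hw hw'
    obtain ⟨l, _, hul⟩ := hA.2 w
    exact hjj' ((hul j (Finset.mem_inter.mp hw).2).trans (hul j' (Finset.mem_inter.mp hw').2).symm)
  have hcardA : (τ.filter fun w => w < v).card = (i : ℕ) := by
    rw [hfilt, Finset.card_biUnion hdisj]
    simp only [hone]
    rw [Finset.sum_const, smul_eq_mul, mul_one, Fin.card_Iio]
  -- Step B : the unique empty-intersection part of τ.erase v is i
  have hB : (Finset.univ.filter fun l => τ.erase v ∩ A l = ∅) = {i} := by
    ext l
    simp only [Finset.mem_filter, Finset.mem_univ, true_and, Finset.mem_singleton]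
    rw [Finset.erase_inter]
    constructor
    · intro h
      by_contra hli
      obtain ⟨u, hu⟩ := Finset.card_eq_one.mp (hone l)
      have huv : u ≠ v := by
        rintro rfl
        exact hli (huniq l (Finset.mem_inter.mp (hu ▸ Finset.mem_singleton_self u)).2)
      have : u ∈ (τ ∩ A l).erase v := Finset.mem_erase.mpr
        ⟨huv, hu ▸ Finset.mem_singleton_self u⟩
      rw [h] at this
      exact absurd this (Finset.notMem_empty u)
    · rintro rfl
      rw [hτAi, Finset.erase_singleton]
  have hassoc : assocCochain A (τ.erase v) = (-1 : ℝ) ^ (i : ℕ) * ((A i).card : ℝ) := by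
    unfold assocCochain
    rw [hB, if_pos (Finset.card_singleton i), Finset.sum_singleton]
  rw [incidence_erase τ hv, hcardA, hassoc,
    Finset.sum_eq_single_of_mem i (Finset.mem_univ i)
      (fun j _ hj => if_neg fun hvj => hj (huniq j hvj)), if_pos hvi,
    ← mul_assoc, ← mul_pow]
  norm_num

lemma sum_card_parts {k : ℕ} (A : Fin (k + 1) → Finset V) (hA : IsPartition A) :
    ∑ l : Fin (k + 1), ((A l).card : ℝ) = (Fintype.card V : ℝ) := by
  have : ∑ l : Fin (k + 1), (A l).card = Fintype.card V := by
    have h1 : ∀ l : Fin (k + 1), (A l).card = ∑ v : V, if v ∈ A l then 1 else 0 := by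
      intro l
      rw [← Finset.sum_filter, Finset.sum_const, smul_eq_mul, mul_one]
      congr 1
      ext w
      simp
    simp_rw [h1]
    rw [Finset.sum_comm]
    have h2 : ∀ v : V, ∑ l : Fin (k + 1), (if v ∈ A l then 1 else 0) = 1 := by
      intro v
      obtain ⟨i, hvi, huniq⟩ := hA.2 v
      rw [Finset.sum_eq_single_of_mem i (Finset.mem_univ i)
        (fun j _ hj => if_neg fun hvj => hj (huniq j hvj)), if_pos hvi]
    simp_rw [h2]
    rw [Finset.sum_const, smul_eq_mul, mul_one]
    exact Finset.card_univ
  exact_mod_cast congrArg (Nat.cast : ℕ → ℝ) this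

lemma sum_key {k : ℕ} (A : Fin (k + 1) → Finset V) (hA : IsPartition A)
    (hord : OrderAdapted A) (τ : Finset V) (hone : ∀ i, (τ ∩ A i).card = 1) :
    ∑ v ∈ τ, incidence τ (τ.erase v) * assocCochain A (τ.erase v)
      = (Fintype.card V : ℝ) := by
  rw [Finset.sum_congr rfl fun v hv => key_f A hA hord τ hone hv, Finset.sum_comm]
  have h1 : ∀ l : Fin (k + 1), ∑ v ∈ τ, (if v ∈ A l then ((A l).card : ℝ) else 0)
      = ((A l).card : ℝ) := by
    intro l
    rw [← Finset.sum_filter, Finset.sum_const]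
    have h : τ.filter (fun v => v ∈ A l) = τ ∩ A l := by
      ext w; simp [Finset.mem_inter]
    rw [h, hone l, one_smul]
  rw [Finset.sum_congr rfl fun l _ => h1 l]
  exact sum_card_parts A hA

end AuxProof

/-- **Lemma 2.2 b).**  Let `X` be a `k`-dimensional complex, `A` a partition of `V` into
`k+1` nonempty parts and `f` the associated cochain (w.r.t. a partition-adapted order).
For `τ = {v_0 < … < v_k} ∈ F^∂(A_0,…,A_k)`, `d_j = d(τ \ {v_j})` and any
`g ∈ C^{k-2}(X;ℝ)`:
`q(τ,g) = ∑_j (1/d_j)·(f(τ\{v_j}) - (δ_{k-2}g)(τ\{v_j}))² ≥ |V|²/(∑_j d_j)`. -/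
theorem q_ge_card_sq_div_sum_deg
    {V : Type*} [DecidableEq V] [Fintype V] [LinearOrder V]
    (X : Finset (Finset V)) (k : ℕ)
    (hX : IsComplex X) (hdim : IsDim X k)
    (A : Fin (k + 1) → Finset V) (hA : IsPartition A) (hord : OrderAdapted A)
    (τ : Finset V) (hτ : τ ∈ Fpar X k A) (g : Finset V → ℝ) :
    (Fintype.card V : ℝ) ^ 2 / (∑ v ∈ τ, (degPar X k A (τ.erase v) : ℝ))
      ≤ ∑ v ∈ τ, (1 / (degPar X k A (τ.erase v) : ℝ)) *
          (assocCochain A (τ.erase v) - delta X (k - 1) g (τ.erase v)) ^ 2 := by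
  have hτ' := Finset.mem_filter.mp hτ
  have hone : ∀ i, (τ ∩ A i).card = 1 := hτ'.2
  have hcard : τ.card = k + 1 := (Finset.mem_filter.mp hτ'.1).2
  have hd : ∀ v ∈ τ, 0 < ((degPar X k A (τ.erase v) : ℝ)) := by
    intro v hv
    have hmem : τ ∈ (Fpar X k A).filter fun τ' => τ.erase v ⊆ τ' :=
      Finset.mem_filter.mpr ⟨hτ, Finset.erase_subset _ _⟩
    exact_mod_cast Nat.cast_pos.mpr (Finset.card_pos.mpr ⟨τ, hmem⟩)
  set F : V → ℝ := fun v => incidence τ (τ.erase v) *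
    (assocCochain A (τ.erase v) - delta X (k - 1) g (τ.erase v)) with hF
  have hS : ∑ v ∈ τ, F v = (Fintype.card V : ℝ) := by
    simp only [hF, mul_sub]
    rw [Finset.sum_sub_distrib, sum_key A hA hord τ hone,
      sum_inc_delta_zero X (k - 1) g τ, sub_zero]
  have hCS := Finset.sq_sum_div_le_sum_sq_div τ F
    (g := fun v => (degPar X k A (τ.erase v) : ℝ)) hd
  rw [hS] at hCS
  refine hCS.trans_eq (Finset.sum_congr rfl fun v hv => ?_)
  have hsq : F v ^ 2
      = (assocCochain A (τ.erase v) - delta X (k - 1) g (τ.erase v)) ^ 2 := by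
    rw [hF]
    simp only
    rw [mul_pow, incidence_erase τ hv, ← pow_mul, mul_comm ((τ.filter fun w => w < v).card) 2,
      pow_mul, neg_one_sq, one_pow, one_mul]
  show F v ^ 2 / ((degPar X k A (τ.erase v) : ℝ)) = _
  rw [hsq]
  ring


end HigherCheeger
end

section
/- Let X be a k-dimensional simplicial complex on a finite vertex set V and let V = A_0 ⊔ A_1 ⊔ … ⊔ A_k be a partition into nonempty parts. Let 1_F ∈ C^{k−1}(X;Z₂) be the indicator cochain of F(A_0,…,A_{k−1}). Then the support of the Z₂-coboundary δ_X 1_F — i.e. the set of k-faces of X having an odd number of (k−1)-faces in F(A_0,…,A_{k−1}) — equals F(A_0,…,A_k); moreover, the support of δ_{K(X)} 1_F, computed in the completion K(X), equals F^∂(A_0,…,A_k). -/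
open Finset

namespace HigherCheeger

variable {V : Type*} [DecidableEq V] [Fintype V] [LinearOrder V]

lemma deltaZ2_indicator_ne_zero_iff (X : Finset (Finset V)) (k : ℕ)
    (A : Fin (k + 1) → Finset V) (hA : IsPartition A)
    (τ : Finset V) (hcard : τ.card = k + 1) (herase : ∀ v ∈ τ, τ.erase v ∈ X) :
    (deltaZ2 (fun σ => if σ ∈ FsetLow X k (fun i : Fin k => A i.castSucc) then 1 else 0) τ ≠ 0)
      ↔ ∀ i, (τ ∩ A i).card = 1 := by
  classical
  have hpartmem : ∀ v : V, ∀ i j, v ∈ A i → v ∈ A j → i = j := by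
    intro v i j hi hj
    obtain ⟨l, -, hu⟩ := hA.2 v
    rw [hu i hi, hu j hj]
  have hsum : ∑ i, (τ ∩ A i).card = τ.card := by
    rw [Finset.card_eq_sum_card_fiberwise (f := fun v => (hA.2 v).choose)
      (t := Finset.univ) (fun x _ => Finset.mem_univ _)]
    refine Finset.sum_congr rfl fun i _ => ?_
    congr 1
    ext x
    simp only [Finset.mem_filter, Finset.mem_inter]
    constructor
    · rintro ⟨hx, hxi⟩; exact ⟨hx, ((hA.2 x).choose_spec.2 i hxi).symm⟩
    · rintro ⟨hx, rfl⟩; exact ⟨hx, (hA.2 x).choose_spec.1⟩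
  have herase_eq : ∀ (v : V) (l : Fin (k+1)), v ∉ A l → (τ ∩ A l).erase v = τ ∩ A l :=
    fun v l h => Finset.erase_eq_of_notMem (fun hm => h (Finset.mem_inter.1 hm).2)
  set P : V → Prop := fun v => ∀ i : Fin k, ((τ ∩ A i.castSucc).erase v).card = 1 with hP
  have hfv : ∀ v ∈ τ,
      (if τ.erase v ∈ FsetLow X k (fun i : Fin k => A i.castSucc) then (1 : ZMod 2) else 0)
      = if P v then 1 else 0 := by
    intro v hv
    have hcc : (τ.erase v).card = k := by rw [Finset.card_erase_of_mem hv, hcard]; rfl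
    have hint : ∀ j, (τ.erase v) ∩ A j = (τ ∩ A j).erase v := by
      intro j; ext x
      simp only [Finset.mem_inter, Finset.mem_erase]
      tauto
    have : τ.erase v ∈ FsetLow X k (fun i : Fin k => A i.castSucc) ↔ P v := by
      simp only [FsetLow, faces, Finset.mem_filter, hint, hP]
      simp [herase v hv, hcc]
    simp [this]
  have hdelta : deltaZ2 (fun σ => if σ ∈ FsetLow X k (fun i : Fin k => A i.castSucc) then 1 else 0) τ
      = ((τ.filter P).card : ZMod 2) := by
    rw [deltaZ2, Finset.sum_congr rfl hfv, Finset.sum_boole]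
  rw [hdelta]
  constructor
  · -- count odd → rainbow
    intro hne
    by_contra hnr
    push_neg at hnr
    rcases Finset.eq_empty_or_nonempty (τ.filter P) with hS | ⟨v, hv⟩
    · rw [hS] at hne; simp at hne
    rw [Finset.mem_filter] at hv
    obtain ⟨hvτ, hvP⟩ := hv
    obtain ⟨j, hvj, -⟩ := hA.2 v
    rcases Fin.eq_castSucc_or_eq_last j with ⟨j0, rfl⟩ | rfl
    · -- the part of v is a castSucc; then τ has two vertices in it and none in the last
      have hn2 : (τ ∩ A j0.castSucc).card = 2 := by
        have := hvP j0
        have hm : v ∈ τ ∩ A j0.castSucc := Finset.mem_inter.2 ⟨hvτ, hvj⟩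
        rw [Finset.card_erase_of_mem hm] at this
        omega
      have hSeq : τ.filter P = τ ∩ A j0.castSucc := by
        ext w
        simp only [Finset.mem_filter, Finset.mem_inter]
        constructor
        · rintro ⟨hwτ, hwP⟩
          refine ⟨hwτ, ?_⟩
          by_contra hwj
          have := hwP j0
          rw [herase_eq w _ hwj, hn2] at this
          omega
        · rintro ⟨hwτ, hwj⟩
          refine ⟨hwτ, fun i => ?_⟩
          by_cases hij : i = j0
          · subst hij
            rw [Finset.card_erase_of_mem (Finset.mem_inter.2 ⟨hwτ, hwj⟩), hn2]
          · have hwi : w ∉ A i.castSucc := fun h =>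
              hij (Fin.castSucc_injective k ((hpartmem w _ _ h hwj)))
            rw [herase_eq w _ hwi]
            have hvi : v ∉ A i.castSucc := fun h =>
              hij (Fin.castSucc_injective k ((hpartmem v _ _ h hvj)))
            have := hvP i
            rwa [herase_eq v _ hvi] at this
      rw [hSeq, hn2] at hne
      exact hne (by decide)
    · -- the part of v is the last one: τ is rainbow — contradiction
      have hlow : ∀ i : Fin k, (τ ∩ A i.castSucc).card = 1 := by
        intro i
        have hvi : v ∉ A i.castSucc := fun h => by
          have := hpartmem v _ _ h hvj
          exact absurd this (Fin.ne_last_of_lt (Fin.castSucc_lt_last i))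
        have := hvP i
        rwa [herase_eq v _ hvi] at this
      have hlast : (τ ∩ A (Fin.last k)).card = 1 := by
        have h1 := hsum
        rw [Fin.sum_univ_castSucc] at h1
        simp only [hlow, Finset.sum_const, smul_eq_mul, mul_one, Finset.card_univ,
          Fintype.card_fin, hcard] at h1
        omega
      obtain ⟨i, hi⟩ := hnr
      rcases Fin.eq_castSucc_or_eq_last i with ⟨i0, rfl⟩ | rfl
      · exact hi (hlow i0)
      · exact hi hlast
  · -- rainbow → count = 1
    intro hr
    obtain ⟨w, hw⟩ := Finset.card_eq_one.1 (hr (Fin.last k))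
    have hwm : w ∈ τ ∩ A (Fin.last k) := hw ▸ Finset.mem_singleton_self w
    obtain ⟨hwτ, hwl⟩ := Finset.mem_inter.1 hwm
    have hSeq : τ.filter P = {w} := by
      ext v
      simp only [Finset.mem_filter, Finset.mem_singleton]
      constructor
      · rintro ⟨hvτ, hvP⟩
        obtain ⟨j, hvj, -⟩ := hA.2 v
        rcases Fin.eq_castSucc_or_eq_last j with ⟨j0, rfl⟩ | rfl
        · exfalso
          have := hvP j0
          rw [Finset.card_erase_of_mem (Finset.mem_inter.2 ⟨hvτ, hvj⟩), hr j0.castSucc] at this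
          omega
        · have : v ∈ τ ∩ A (Fin.last k) := Finset.mem_inter.2 ⟨hvτ, hvj⟩
          rw [hw, Finset.mem_singleton] at this
          exact this
      · intro hvw
        rw [hvw]
        refine ⟨hwτ, fun i => ?_⟩
        have hwi : w ∉ A i.castSucc := fun h => by
          have := hpartmem w _ _ h hwl
          exact absurd this (Fin.ne_last_of_lt (Fin.castSucc_lt_last i))
        rw [herase_eq w _ hwi]
        exact hr i.castSucc
    rw [hSeq]
    simp

/-- For a partition `V = A_0 ⊔ … ⊔ A_k`, the support of the `Z₂`-coboundary (in `X`) of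
the indicator cochain of `F(A_0,…,A_{k-1})` is exactly `F(A_0,…,A_k)`, and its support
in the completion `K(X)` is exactly `F^∂(A_0,…,A_k)`. -/
theorem suppDelta_indicator_eq_Fset
    {V : Type*} [DecidableEq V] [Fintype V] [LinearOrder V]
    (X : Finset (Finset V)) (k : ℕ)
    (hX : IsComplex X) (hdim : IsDim X k)
    (A : Fin (k + 1) → Finset V) (hA : IsPartition A) :
    suppDelta X k
        (fun σ => if σ ∈ FsetLow X k (fun i : Fin k => A i.castSucc) then 1 else 0)
      = Fset X k A ∧
    suppDelta (completion X k) k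
        (fun σ => if σ ∈ FsetLow X k (fun i : Fin k => A i.castSucc) then 1 else 0)
      = Fpar X k A := by
  classical
  constructor
  · unfold suppDelta Fset
    refine Finset.filter_congr fun τ hτ => ?_
    simp only [faces, Finset.mem_filter] at hτ
    exact deltaZ2_indicator_ne_zero_iff X k A hA τ hτ.2
      (fun v hv => hX τ hτ.1 _ (Finset.erase_subset v τ))
  · unfold suppDelta Fpar
    refine Finset.filter_congr fun τ hτ => ?_
    simp only [faces, Finset.mem_filter] at hτ
    refine deltaZ2_indicator_ne_zero_iff X k A hA τ hτ.2 ?_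
    rcases Finset.mem_union.1 hτ.1 with h | h
    · exact fun v hv => hX τ h _ (Finset.erase_subset v τ)
    · exact fun v hv => (Finset.mem_filter.1 h).2.2 v hv


end HigherCheeger
end

section
/- Let X be a k-dimensional simplicial complex on a vertex set V with n vertices and with complete (k−1)-skeleton. Then φ(X) ≤ h̃(X) ≤ (k+1)·φ(X). -/
open Finset

namespace HigherCheeger

variable {V : Type*} [DecidableEq V] [Fintype V] [LinearOrder V]

section Aux

variable {V : Type*} [DecidableEq V] [Fintype V] [LinearOrder V]

lemma mem_faces_k {X : Finset (Finset V)} {k : ℕ} (hskel : CompleteSkeleton X k)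
    {σ : Finset V} : σ ∈ faces X k ↔ σ.card = k :=
  ⟨fun h => (Finset.mem_filter.1 h).2, fun h => Finset.mem_filter.2 ⟨hskel _ h.le, h⟩⟩

lemma faces_completion_top {X : Finset (Finset V)} {k : ℕ}
    (hskel : CompleteSkeleton X k) {τ : Finset V} :
    τ ∈ faces (completion X k) (k + 1) ↔ τ.card = k + 1 := by
  constructor
  · exact fun h => (Finset.mem_filter.1 h).2
  · intro hc
    refine Finset.mem_filter.2 ⟨Finset.mem_union.2 (Or.inr ?_), hc⟩
    refine Finset.mem_filter.2 ⟨Finset.mem_univ _, hc, fun v hv => ?_⟩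
    exact hskel _ (by rw [Finset.card_erase_of_mem hv, hc]; simp)

lemma deltaZ2_deltaZ2 (g : Finset V → ZMod 2) (τ : Finset V) :
    deltaZ2 (deltaZ2 g) τ = 0 := by
  unfold deltaZ2
  rw [Finset.sum_sigma' τ (fun v => τ.erase v)
    (fun v w => g ((τ.erase v).erase w))]
  refine Finset.sum_involution (fun p _ => ⟨p.2, p.1⟩) ?_ ?_ ?_ ?_
  · intro a ha
    rw [Finset.erase_right_comm]
    exact CharTwo.add_self_eq_zero _
  · intro a ha _
    obtain ⟨h1, h2⟩ := Finset.mem_sigma.1 ha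
    intro hcon
    exact (Finset.ne_of_mem_erase h2) (congrArg Sigma.fst hcon)
  · intro a ha
    obtain ⟨h1, h2⟩ := Finset.mem_sigma.1 ha
    exact Finset.mem_sigma.2 ⟨Finset.erase_subset _ _ h2,
      Finset.mem_erase.2 ⟨(Finset.ne_of_mem_erase h2).symm, h1⟩⟩
  · intro a ha; rfl

lemma suppDelta_add_delta (X : Finset (Finset V)) (k : ℕ) (f g : Finset V → ZMod 2) :
    suppDelta X k (fun σ => f σ + deltaZ2 g σ) = suppDelta X k f := by
  unfold suppDelta
  apply Finset.filter_congr
  intro τ _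
  have : deltaZ2 (fun σ => f σ + deltaZ2 g σ) τ = deltaZ2 f τ := by
    unfold deltaZ2
    rw [Finset.sum_add_distrib]
    have := deltaZ2_deltaZ2 g τ
    unfold deltaZ2 at this
    rw [this, add_zero]
  rw [this]

/-- Lemma A: `|δ_K h| ≤ n · |h|`. -/
lemma card_suppDelta_completion_le {X : Finset (Finset V)} {k : ℕ}
    (hskel : CompleteSkeleton X k) (h : Finset V → ZMod 2) :
    (suppDelta (completion X k) k h).card ≤ Fintype.card V * hamming X k h := by
  classical
  set S : Finset (Finset V) := (faces X k).filter (fun σ => h σ ≠ 0) with hS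
  have hsub : suppDelta (completion X k) k h ⊆
      (S ×ˢ (Finset.univ : Finset V)).image (fun p => insert p.2 p.1) := by
    intro τ hτ
    obtain ⟨hτf, hτd⟩ := Finset.mem_filter.1 hτ
    have hcard : τ.card = k + 1 := (faces_completion_top hskel).1 hτf
    have hex : ∃ v ∈ τ, h (τ.erase v) ≠ 0 := by
      by_contra hcon
      push_neg at hcon
      exact hτd (Finset.sum_eq_zero hcon)
    obtain ⟨v, hv, hval⟩ := hex
    refine Finset.mem_image.2 ⟨(τ.erase v, v), ?_, Finset.insert_erase hv⟩
    refine Finset.mem_product.2 ⟨Finset.mem_filter.2 ⟨?_, hval⟩, Finset.mem_univ _⟩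
    refine (mem_faces_k hskel).2 ?_
    rw [Finset.card_erase_of_mem hv, hcard]; simp
  calc (suppDelta (completion X k) k h).card
      ≤ ((S ×ˢ (Finset.univ : Finset V)).image (fun p => insert p.2 p.1)).card :=
        Finset.card_le_card hsub
    _ ≤ (S ×ˢ (Finset.univ : Finset V)).card := Finset.card_image_le
    _ = S.card * Fintype.card V := by rw [Finset.card_product, Finset.card_univ]
    _ = Fintype.card V * hamming X k h := by rw [mul_comm]; rfl

/-- The cone cochain used in Lemma B. -/
def coneg (v : V) (f : Finset V → ZMod 2) : Finset V → ZMod 2 :=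
  fun σ => if v ∈ σ then 0 else f (insert v σ)

lemma cone_compute (f : Finset V → ZMod 2) (v : V) (σ : Finset V) :
    f σ + deltaZ2 (coneg v f) σ =
      if v ∈ σ then 0 else deltaZ2 f (insert v σ) := by
  by_cases hv : v ∈ σ
  · simp only [hv, if_true]
    have : deltaZ2 (coneg v f) σ = f σ := by
      unfold deltaZ2
      rw [Finset.sum_eq_single_of_mem v hv]
      · simp [coneg, Finset.insert_erase hv, Finset.notMem_erase]
      · intro w hw hwv
        have : v ∈ σ.erase w := Finset.mem_erase.2 ⟨hwv.symm, hv⟩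
        simp [coneg, this]
    rw [this]
    exact CharTwo.add_self_eq_zero _
  · simp only [hv, if_false]
    have hterm : ∀ w ∈ σ, coneg v f (σ.erase w) = f ((insert v σ).erase w) := by
      intro w hw
      have hvw : v ≠ w := fun hc => hv (hc ▸ hw)
      have hvnot : v ∉ σ.erase w := fun hc => hv (Finset.mem_of_mem_erase hc)
      simp only [coneg, hvnot, if_false]
      rw [Finset.erase_insert_of_ne hvw]
    unfold deltaZ2
    rw [Finset.sum_insert hv, Finset.erase_insert hv]
    rw [Finset.sum_congr rfl hterm]

lemma cone_hamming {X : Finset (Finset V)} {k : ℕ} (hskel : CompleteSkeleton X k)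
    (f : Finset V → ZMod 2) (v : V) :
    hamming X k (fun σ => f σ + deltaZ2 (coneg v f) σ) =
      ((suppDelta (completion X k) k f).filter fun τ => v ∈ τ).card := by
  classical
  unfold hamming
  refine Finset.card_bij' (fun σ _ => insert v σ) (fun τ _ => τ.erase v) ?_ ?_ ?_ ?_
  · intro σ hσ
    obtain ⟨hσf, hσv'⟩ := Finset.mem_filter.1 hσ
    have hσv : f σ + deltaZ2 (coneg v f) σ ≠ 0 := hσv'
    rw [cone_compute] at hσv
    have hvσ : v ∉ σ := by intro hc; simp [hc] at hσv
    simp only [hvσ, if_false] at hσv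
    have hcard : σ.card = k := (mem_faces_k hskel).1 hσf
    refine Finset.mem_filter.2 ⟨Finset.mem_filter.2 ⟨?_, hσv⟩, Finset.mem_insert_self _ _⟩
    exact (faces_completion_top hskel).2 (by rw [Finset.card_insert_of_notMem hvσ, hcard])
  · intro τ hτ
    obtain ⟨hτs, hvτ⟩ := Finset.mem_filter.1 hτ
    obtain ⟨hτf, hτd⟩ := Finset.mem_filter.1 hτs
    have hcard : τ.card = k + 1 := (faces_completion_top hskel).1 hτf
    have hvnot : v ∉ τ.erase v := Finset.notMem_erase _ _
    refine Finset.mem_filter.2 ⟨(mem_faces_k hskel).2 ?_, ?_⟩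
    · rw [Finset.card_erase_of_mem hvτ, hcard]; simp
    · show f (τ.erase v) + deltaZ2 (coneg v f) (τ.erase v) ≠ 0
      rw [cone_compute]
      simp only [hvnot, if_false]
      rw [Finset.insert_erase hvτ]
      exact hτd
  · intro σ hσ
    obtain ⟨hσf, hσv'⟩ := Finset.mem_filter.1 hσ
    have hσv : f σ + deltaZ2 (coneg v f) σ ≠ 0 := hσv'
    rw [cone_compute] at hσv
    have hvσ : v ∉ σ := by intro hc; simp [hc] at hσv
    show (insert v σ).erase v = σ
    exact Finset.erase_insert hvσ
  · intro τ hτ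
    obtain ⟨hτs, hvτ⟩ := Finset.mem_filter.1 hτ
    exact Finset.insert_erase ((Finset.mem_filter.1 hτ).2)

/-- Lemma B: `n · |[f]| ≤ (k+1) · |δ_K f|`. -/
lemma lemmaB {X : Finset (Finset V)} {k : ℕ} (hskel : CompleteSkeleton X k)
    (f : Finset V → ZMod 2) :
    Fintype.card V * normClass X k f ≤
      (k + 1) * (suppDelta (completion X k) k f).card := by
  classical
  set D := suppDelta (completion X k) k f with hD
  have hcv : ∀ v : V, normClass X k f ≤ (D.filter fun τ => v ∈ τ).card := by
    intro v
    rw [← cone_hamming hskel f v]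
    exact Nat.sInf_le ⟨coneg v f, rfl⟩
  calc Fintype.card V * normClass X k f
      = ∑ _v : V, normClass X k f := by rw [Finset.sum_const, Finset.card_univ, smul_eq_mul]
    _ ≤ ∑ v : V, (D.filter fun τ => v ∈ τ).card := Finset.sum_le_sum fun v _ => hcv v
    _ = ∑ v : V, ∑ τ ∈ D, (if v ∈ τ then 1 else 0) := by
        refine Finset.sum_congr rfl fun v _ => ?_
        rw [Finset.card_filter]
    _ = ∑ τ ∈ D, ∑ v : V, (if v ∈ τ then 1 else 0) := Finset.sum_comm
    _ = ∑ τ ∈ D, τ.card := by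
        refine Finset.sum_congr rfl fun τ _ => ?_
        rw [← Finset.card_filter, Finset.filter_univ_mem]
    _ = ∑ τ ∈ D, (k + 1) := by
        refine Finset.sum_congr rfl fun τ hτ => ?_
        exact (faces_completion_top hskel).1 (Finset.mem_filter.1 hτ).1
    _ = (k + 1) * D.card := by rw [Finset.sum_const, smul_eq_mul, mul_comm]

lemma normClass_attained (X : Finset (Finset V)) (k : ℕ) (f : Finset V → ZMod 2) :
    ∃ g : Finset V → ZMod 2,
      normClass X k f = hamming X k fun σ => f σ + deltaZ2 g σ := by
  have hne : {m : ℕ | ∃ g : Finset V → ZMod 2,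
      m = hamming X k fun σ => f σ + deltaZ2 g σ}.Nonempty :=
    ⟨_, ⟨0, rfl⟩⟩
  exact Nat.sInf_mem hne

/-- `|δ_K f| ≤ n · |[f]|`. -/
lemma lemmaA {X : Finset (Finset V)} {k : ℕ} (hskel : CompleteSkeleton X k)
    (f : Finset V → ZMod 2) :
    (suppDelta (completion X k) k f).card ≤ Fintype.card V * normClass X k f := by
  obtain ⟨g, hg⟩ := normClass_attained X k f
  rw [hg, ← suppDelta_add_delta (completion X k) k f g]
  exact card_suppDelta_completion_le hskel _

lemma suppDelta_subset {X : Finset (Finset V)} {k : ℕ} (hskel : CompleteSkeleton X k)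
    (f : Finset V → ZMod 2) :
    suppDelta X k f ⊆ suppDelta (completion X k) k f := by
  intro τ hτ
  obtain ⟨hτf, hτd⟩ := Finset.mem_filter.1 hτ
  exact Finset.mem_filter.2
    ⟨(faces_completion_top hskel).2 (Finset.mem_filter.1 hτf).2, hτd⟩

end Aux

/-- For a `k`-dimensional complex `X` on `n` vertices with complete `(k-1)`-skeleton:
`φ(X) ≤ h̃(X) ≤ (k+1)·φ(X)`. -/
theorem phi_le_htilde_le_of_completeSkeleton
    {V : Type*} [DecidableEq V] [Fintype V] [LinearOrder V]
    (X : Finset (Finset V)) (k : ℕ)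
    (hX : IsComplex X) (hdim : IsDim X k) (hskel : CompleteSkeleton X k) :
    phi X k ≤ htilde X k ∧ htilde X k ≤ (((k + 1 : ℝ)) : EReal) * phi X k := by
  classical
  have hnpos : 0 < Fintype.card V := by
    obtain ⟨σ₀, _, hσ₀c⟩ := hdim.2
    obtain ⟨v, _⟩ := Finset.card_pos.1 (by rw [hσ₀c]; omega : 0 < σ₀.card)
    exact Fintype.card_pos_iff.2 ⟨v⟩
  set pval : (Finset V → ZMod 2) → EReal := fun f =>
    if normClass X k f = 0 then (⊤ : EReal)
    else ((((suppDelta X k f).card : ℝ) / (normClass X k f : ℝ) : ℝ) : EReal) with hpval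
  set hvalf : (Finset V → ZMod 2) → EReal := fun f =>
    if (suppDelta (completion X k) k f).card = 0 then (⊤ : EReal)
    else (((Fintype.card V * (suppDelta X k f).card : ℝ) /
          ((suppDelta (completion X k) k f).card : ℝ) : ℝ) : EReal) with hhval
  have hphi : phi X k = sInf {r : EReal | ∃ f, r = pval f} := rfl
  have hht : htilde X k = sInf {r : EReal | ∃ f, r = hvalf f} := rfl
  have hPfin : {r : EReal | ∃ f, r = pval f}.Finite :=
    (Set.finite_range pval).subset fun r ⟨f, hf⟩ => ⟨f, hf.symm⟩
  have hHfin : {r : EReal | ∃ f, r = hvalf f}.Finite :=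
    (Set.finite_range hvalf).subset fun r ⟨f, hf⟩ => ⟨f, hf.symm⟩
  have hPne : {r : EReal | ∃ f, r = pval f}.Nonempty := ⟨pval 0, 0, rfl⟩
  have hHne : {r : EReal | ∃ f, r = hvalf f}.Nonempty := ⟨hvalf 0, 0, rfl⟩
  -- key pointwise comparison: `pval f ≤ hvalf f`
  have key1 : ∀ f : Finset V → ZMod 2, pval f ≤ hvalf f := by
    intro f
    by_cases hDK : (suppDelta (completion X k) k f).card = 0
    · simp only [hhval, hDK, if_pos]
      exact le_top
    · have hA := lemmaA hskel f
      have hN : normClass X k f ≠ 0 := by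
        intro h0
        rw [h0, mul_zero, Nat.le_zero] at hA
        exact hDK hA
      simp only [hpval, hhval, if_neg hDK, if_neg hN]
      rw [EReal.coe_le_coe_iff]
      have hNpos : (0:ℝ) < (normClass X k f : ℝ) := by
        exact_mod_cast Nat.pos_of_ne_zero hN
      have hDKpos : (0:ℝ) < ((suppDelta (completion X k) k f).card : ℝ) := by
        exact_mod_cast Nat.pos_of_ne_zero hDK
      have hA' : ((suppDelta (completion X k) k f).card : ℝ) ≤
          (Fintype.card V : ℝ) * (normClass X k f : ℝ) := by exact_mod_cast hA
      have hDx0 : (0:ℝ) ≤ ((suppDelta X k f).card : ℝ) := by positivity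
      push_cast
      rw [div_le_div_iff₀ hNpos hDKpos]
      nlinarith [mul_le_mul_of_nonneg_left hA' hDx0]
  constructor
  · -- φ ≤ h̃
    obtain ⟨f, hf⟩ := hHne.csInf_mem hHfin
    rw [hphi, hht, hf]
    exact le_trans (sInf_le ⟨f, rfl⟩) (key1 f)
  · -- h̃ ≤ (k+1)·φ
    obtain ⟨f, hf⟩ := hPne.csInf_mem hPfin
    rw [hht, hphi, hf]
    by_cases hN : normClass X k f = 0
    · have htop : pval f = ⊤ := by simp only [hpval, hN, if_pos]
      rw [htop, EReal.mul_top_of_pos (by exact_mod_cast (by positivity : (0:ℝ) < (k:ℝ) + 1))]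
      exact le_top
    · have hB := lemmaB hskel f
      have hDK : (suppDelta (completion X k) k f).card ≠ 0 := by
        intro h0
        rw [h0, mul_zero, Nat.le_zero, Nat.mul_eq_zero] at hB
        rcases hB with h | h
        · omega
        · exact hN h
      refine le_trans (sInf_le ⟨f, rfl⟩) ?_
      simp only [hpval, hhval, if_neg hDK, if_neg hN]
      rw [← EReal.coe_mul, EReal.coe_le_coe_iff]
      have hNpos : (0:ℝ) < (normClass X k f : ℝ) := by
        exact_mod_cast Nat.pos_of_ne_zero hN
      have hDKpos : (0:ℝ) < ((suppDelta (completion X k) k f).card : ℝ) := by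
        exact_mod_cast Nat.pos_of_ne_zero hDK
      have hB' : (Fintype.card V : ℝ) * (normClass X k f : ℝ) ≤
          ((k:ℝ) + 1) * ((suppDelta (completion X k) k f).card : ℝ) := by
        exact_mod_cast hB
      have hDx0 : (0:ℝ) ≤ ((suppDelta X k f).card : ℝ) := by positivity
      push_cast
      rw [mul_div_assoc', div_le_div_iff₀ hDKpos hNpos]
      nlinarith [mul_le_mul_of_nonneg_left hB' hDx0]

end HigherCheeger
end
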